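/- arXiv:2301.12177 — 3 statements merged into one kernel-verified Lean document; each statement's English description precedes it below -/
import Mathlib

section
/- Let H be the matrix H = (1/2) X^T (S^{-1} - R^T S^{-1} R) X where X = (I - R)^{-1} M, S is a symmetric positive definite n×n real matrix, R is an n×n real matrix with spectral radius ρ(R) = k < 1 satisfying R S = S R^T, and M is an n×n invertible real matrix. Then H is symmetric positive definite. -/
open Matrix

/-- Congruence of a positive definite real matrix by an invertible matrix. -/
lemma posDef_conj_aux {n : ℕ} {A B : Matrix (Fin n) (Fin n) ℝ} (hA : A.PosDef)
    (hB : IsUnit B.det) : (Bᵀ * A * B).PosDef := by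
  refine posDef_iff_dotProduct_mulVec.mpr ?_
  constructor
  · show (Bᵀ * A * B)ᴴ = _
    rw [conjTranspose_mul, conjTranspose_mul, hA.1.eq,
      conjTranspose_eq_transpose_of_trivial, conjTranspose_eq_transpose_of_trivial,
      transpose_transpose, mul_assoc]
  · intro x hx
    have hBx : B *ᵥ x ≠ 0 := by
      intro h
      exact hx <| (Matrix.mulVec_injective_iff_isUnit.mpr
        ((Matrix.isUnit_iff_isUnit_det B).mpr hB)).eq_iff.mp (by simpa using h)
    have key : star x ⬝ᵥ (Bᵀ * A * B) *ᵥ x = star (B *ᵥ x) ⬝ᵥ A *ᵥ (B *ᵥ x) := by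
      rw [← mulVec_mulVec, ← mulVec_mulVec, dotProduct_mulVec, vecMul_transpose]
      simp [star_trivial]
    rw [key]
    exact hA.dotProduct_mulVec_pos hBx

/-- A positive scalar multiple of a positive definite real matrix is positive definite. -/
lemma posDef_smul_aux {n : ℕ} {A : Matrix (Fin n) (Fin n) ℝ} (hA : A.PosDef)
    {c : ℝ} (hc : 0 < c) : (c • A).PosDef := by
  refine posDef_iff_dotProduct_mulVec.mpr ?_
  constructor
  · show (c • A)ᴴ = _
    rw [conjTranspose_smul, hA.1.eq, star_trivial]
  · intro x hx
    rw [smul_mulVec, dotProduct_smul, smul_eq_mul]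
    exact mul_pos hc (hA.dotProduct_mulVec_pos hx)

theorem stmt0 {n : ℕ} (S R M X H : Matrix (Fin n) (Fin n) ℝ) (k : ℝ)
    (hS : S.PosDef) (hM : IsUnit M.det)
    (hcomm : R * S = S * Rᵀ)
    (hk : k < 1)
    (hspec : IsGreatest ((fun z : ℂ => ‖z‖) '' spectrum ℂ (R.map (algebraMap ℝ ℂ))) k)
    (hX : X = (1 - R)⁻¹ * M)
    (hH : H = (1 / 2 : ℝ) • (Xᵀ * (S⁻¹ - Rᵀ * S⁻¹ * R) * X)) :
    H.PosDef := by
  classical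
  have hSdet : IsUnit S.det := hS.det_pos.ne'.isUnit
  open MatrixOrder in set B := CFC.sqrt S with hBdef
  have hBB : B * B = S := by open MatrixOrder in exact CFC.sqrt_mul_sqrt_self S hS.posSemidef.nonneg
  have hBsymm : Bᵀ = B := by
    rw [← conjTranspose_eq_transpose_of_trivial]; open MatrixOrder in exact (CFC.sqrt_nonneg S).posSemidef.1
  have hBdet : IsUnit B.det := by
    have : B.det * B.det = S.det := by rw [← det_mul, hBB]
    exact isUnit_of_mul_isUnit_left (this ▸ hSdet)
  have hSinv : S⁻¹ = B⁻¹ * B⁻¹ := by rw [← hBB, Matrix.mul_inv_rev]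
  have hBinvdet : IsUnit B⁻¹.det := B.isUnit_nonsing_inv_det hBdet
  have hBinvsymm : (B⁻¹)ᵀ = B⁻¹ := by rw [Matrix.transpose_nonsing_inv, hBsymm]
  -- the symmetrized matrix C
  set C := B⁻¹ * R * B with hCdef
  have hBC : B * C = R * B := by
    rw [hCdef, ← mul_assoc, Matrix.mul_nonsing_inv_cancel_left _ _ hBdet]
  -- Rᵀ S⁻¹ = S⁻¹ R
  have hRS : Rᵀ * S⁻¹ = S⁻¹ * R := by
    have h1 : S⁻¹ * (R * S) * S⁻¹ = S⁻¹ * (S * Rᵀ) * S⁻¹ := by rw [hcomm]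
    rw [Matrix.nonsing_inv_mul_cancel_left _ _ hSdet, ← mul_assoc,
      Matrix.mul_nonsing_inv_cancel_right _ _ hSdet] at h1
    exact h1.symm
  have hCsymm : Cᵀ = C := by
    have key : B * Rᵀ * B⁻¹ = B⁻¹ * R * B := by
      calc B * Rᵀ * B⁻¹ = B * Rᵀ * B⁻¹ * B⁻¹ * B := by
            rw [Matrix.nonsing_inv_mul_cancel_right _ _ hBdet]
        _ = B * (Rᵀ * S⁻¹) * B := by rw [hSinv]; simp only [mul_assoc]
        _ = B * (S⁻¹ * R) * B := by rw [hRS]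
        _ = B⁻¹ * R * B := by
            rw [hSinv]; simp only [mul_assoc]
            rw [Matrix.mul_nonsing_inv_cancel_left _ _ hBdet]
    rw [hCdef, transpose_mul, transpose_mul, hBsymm, hBinvsymm, ← mul_assoc, key]
  have hCH : C.IsHermitian := by
    show Cᴴ = C
    rw [conjTranspose_eq_transpose_of_trivial, hCsymm]
  -- each eigenvalue of C has absolute value ≤ k
  have heig : ∀ i : Fin n, |hCH.eigenvalues i| ≤ k := by
    intro i
    set μ := hCH.eigenvalues i with hμ
    have hmem : μ ∈ spectrum ℝ C := hCH.eigenvalues_mem_spectrum_real i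
    rw [spectrum.mem_iff] at hmem
    have hdetC : ((algebraMap ℝ (Matrix (Fin n) (Fin n) ℝ)) μ - C).det = 0 := by
      by_contra h
      exact hmem ((Matrix.isUnit_iff_isUnit_det _).mpr (Ne.isUnit h))
    have hscalar_comm : ∀ (P : Matrix (Fin n) (Fin n) ℝ),
        (algebraMap ℝ (Matrix (Fin n) (Fin n) ℝ)) μ * P
          = P * (algebraMap ℝ (Matrix (Fin n) (Fin n) ℝ)) μ := by
      intro P
      simp [Algebra.commutes]
    have hdetR : ((algebraMap ℝ (Matrix (Fin n) (Fin n) ℝ)) μ - R).det = 0 := by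
      have key : B * ((algebraMap ℝ (Matrix (Fin n) (Fin n) ℝ)) μ - C)
          = ((algebraMap ℝ (Matrix (Fin n) (Fin n) ℝ)) μ - R) * B := by
        rw [mul_sub, sub_mul, hBC, hscalar_comm B]
      have := congrArg Matrix.det key
      rw [det_mul, det_mul, hdetC, mul_zero] at this
      rcases mul_eq_zero.mp this.symm with h | h
      · exact h
      · exact absurd h hBdet.ne_zero
    have hmemC : (μ : ℂ) ∈ spectrum ℂ (R.map (algebraMap ℝ ℂ)) := by
      rw [spectrum.mem_iff]
      intro hu
      have hdet0 : ((algebraMap ℂ (Matrix (Fin n) (Fin n) ℂ)) (μ : ℂ)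
          - R.map (algebraMap ℝ ℂ)).det = 0 := by
        have hmap : ((algebraMap ℝ (Matrix (Fin n) (Fin n) ℝ)) μ - R).map (algebraMap ℝ ℂ)
            = (algebraMap ℂ (Matrix (Fin n) (Fin n) ℂ)) (μ : ℂ) - R.map (algebraMap ℝ ℂ) := by
          rw [Matrix.map_sub _ (fun a b => by simp)]
          congr 1
          rw [Matrix.map_algebraMap μ _ (map_zero _) (by simp),
            IsScalarTower.algebraMap_apply ℝ ℂ (Matrix (Fin n) (Fin n) ℂ)]
          norm_num
        have hd := (algebraMap ℝ ℂ).map_det ((algebraMap ℝ (Matrix (Fin n) (Fin n) ℝ)) μ - R)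
        rw [hdetR, map_zero, RingHom.mapMatrix_apply, hmap] at hd
        exact hd.symm
      rw [Matrix.isUnit_iff_isUnit_det, hdet0] at hu
      exact (not_isUnit_zero hu)
    have := hspec.2 ⟨(μ : ℂ), hmemC, rfl⟩
    simpa using this
  set d := hCH.eigenvalues with hd
  -- positive definiteness of 1 - C * C
  set U : Matrix (Fin n) (Fin n) ℝ := (hCH.eigenvectorUnitary : Matrix (Fin n) (Fin n) ℝ)
    with hUdef
  have hU1 : star U * U = 1 := (Unitary.mem_iff.mp hCH.eigenvectorUnitary.2).1
  have hU2 : U * star U = 1 := (Unitary.mem_iff.mp hCH.eigenvectorUnitary.2).2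
  have hCspec : C = U * diagonal d * star U := by
    have := hCH.spectral_theorem
    convert this using 3
    simp [Unitary.conjStarAlgAut_apply, hd, hUdef, RCLike.ofReal_real_eq_id]
  have h1CC : (1 - C * C) = U * diagonal (fun i => 1 - d i * d i)
      * star U := by
    have hCC : C * C = U * diagonal (fun i => d i * d i) * star U := by
      rw [hCspec]
      calc (U * diagonal d * star U) * (U * diagonal d * star U)
          = U * diagonal d * (star U * U) * diagonal d * star U := by
            simp only [mul_assoc]
        _ = U * (diagonal d * diagonal d) * star U := by
            rw [hU1]; simp only [mul_one, mul_assoc]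
        _ = U * diagonal (fun i => d i * d i) * star U := by
            rw [diagonal_mul_diagonal]
    have hone : (1 : Matrix (Fin n) (Fin n) ℝ) = U * diagonal (fun _ => (1:ℝ)) * star U := by
      rw [diagonal_one, mul_one, hU2]
    rw [hCC]
    nth_rewrite 1 [hone]
    rw [← sub_mul, ← mul_sub, diagonal_sub]
  have hdiagpos : (diagonal (fun i => 1 - d i * d i)).PosDef := by
    refine Matrix.PosDef.diagonal fun i => ?_
    have h1 : |d i| < 1 := lt_of_le_of_lt (heig i) hk
    have h2 := abs_lt.mp h1
    nlinarith [h2.1, h2.2]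
  have hUunit : IsUnit (star U).det := by
    have h1 : U.det * (star U).det = 1 := by rw [← det_mul, hU2, det_one]
    exact isUnit_of_mul_isUnit_right (h1 ▸ (isUnit_one : IsUnit (1:ℝ)))
  have h1C : (1 - C * C).PosDef := by
    rw [h1CC]
    have := posDef_conj_aux hdiagpos hUunit
    convert this using 2
    rw [star_eq_conjTranspose, conjTranspose_eq_transpose_of_trivial, transpose_transpose]
  -- S⁻¹ - Rᵀ S⁻¹ R = B⁻¹ (1 - C C) B⁻¹
  have hAeq : S⁻¹ - Rᵀ * S⁻¹ * R = B⁻¹ * (1 - C * C) * B⁻¹ := by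
    have hCBinv : C * B⁻¹ = B⁻¹ * R := by
      rw [hCdef, Matrix.mul_nonsing_inv_cancel_right _ _ hBdet]
    have : B⁻¹ * (C * C) * B⁻¹ = Rᵀ * S⁻¹ * R := by
      calc B⁻¹ * (C * C) * B⁻¹ = (B⁻¹ * C) * (C * B⁻¹) := by simp only [mul_assoc]
        _ = (B⁻¹ * (B⁻¹ * R * B)) * (B⁻¹ * R) := by rw [hCBinv, hCdef]
        _ = B⁻¹ * B⁻¹ * R * (B * B⁻¹) * R := by simp only [mul_assoc]
        _ = S⁻¹ * R * R := by
            rw [Matrix.mul_nonsing_inv _ hBdet, mul_one, hSinv, mul_assoc]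
        _ = Rᵀ * S⁻¹ * R := by rw [hRS]
    rw [mul_sub, sub_mul, mul_one, ← hSinv, this]
  have hApos : (S⁻¹ - Rᵀ * S⁻¹ * R).PosDef := by
    rw [hAeq]
    have := posDef_conj_aux h1C hBinvdet
    rwa [hBinvsymm] at this
  -- X is invertible
  have hdet1R : IsUnit (1 - R).det := by
    have hdetEq : (1 - R).det = (1 - C).det := by
      have key : (1 - R) * B = B * (1 - C) := by rw [mul_sub, sub_mul, hBC, mul_one, one_mul]
      have := congrArg Matrix.det key
      rw [det_mul, det_mul] at this
      have hBne : B.det ≠ 0 := hBdet.ne_zero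
      rw [mul_comm B.det] at this
      exact mul_right_cancel₀ hBne this
    have hdet1C : (1 - C).det ≠ 0 := by
      intro h
      have hfact : (1 - C) * (1 + C) = 1 - C * C := by noncomm_ring
      have := h1C.det_pos
      rw [← hfact, det_mul, h, zero_mul] at this
      exact lt_irrefl _ this
    rw [hdetEq]
    exact hdet1C.isUnit
  have hXdet : IsUnit X.det := by
    rw [hX, det_mul]
    exact ((1 - R).isUnit_nonsing_inv_det hdet1R).mul hM
  -- conclude
  rw [hH]
  refine posDef_smul_aux ?_ (by norm_num)
  exact posDef_conj_aux hApos hXdet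
end

section
/- If S is symmetric positive definite and R satisfies RS = SR^T with spectral radius ρ(R) = k < 1, then for all y ∈ ℝ^n, y^T (S^{-1} − R^T S^{-1} R) y ≥ (1 − k²) y^T S^{-1} y; in particular S^{-1} − R^T S^{-1} R is symmetric positive definite. -/
open Matrix
open scoped MatrixOrder

private lemma unit_dot' {n : ℕ} {U : Matrix (Fin n) (Fin n) ℝ} (hU : Uᵀ * U = 1)
    (a : Fin n → ℝ) : (U *ᵥ a) ⬝ᵥ (U *ᵥ a) = a ⬝ᵥ a := by
  rw [dotProduct_mulVec, ← mulVec_transpose, mulVec_mulVec, hU, one_mulVec]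

private lemma quad_eq' {n : ℕ} (A : Matrix (Fin n) (Fin n) ℝ) (y : Fin n → ℝ) :
    y ⬝ᵥ (Aᵀ * A) *ᵥ y = (A *ᵥ y) ⬝ᵥ (A *ᵥ y) := by
  rw [← mulVec_mulVec, dotProduct_mulVec, vecMul_transpose]

private lemma herm_bound' {n : ℕ} {M : Matrix (Fin n) (Fin n) ℝ} (hM : M.IsHermitian) {k : ℝ}
    (hb : ∀ i, |hM.eigenvalues i| ≤ k) (z : Fin n → ℝ) :
    (M *ᵥ z) ⬝ᵥ (M *ᵥ z) ≤ k ^ 2 * (z ⬝ᵥ z) := by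
  set U : Matrix (Fin n) (Fin n) ℝ := (hM.eigenvectorUnitary : Matrix (Fin n) (Fin n) ℝ)
    with hUdef
  have hstar : (star U : Matrix (Fin n) (Fin n) ℝ) = Uᵀ := by
    rw [Matrix.star_eq_conjTranspose, Matrix.conjTranspose_eq_transpose_of_trivial]
  have hU1 : Uᵀ * U = 1 := by
    rw [← hstar]; exact (Matrix.mem_unitaryGroup_iff').mp hM.eigenvectorUnitary.2
  have hU2 : U * Uᵀ = 1 := by
    rw [← hstar]; exact (Matrix.mem_unitaryGroup_iff).mp hM.eigenvectorUnitary.2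
  set w : Fin n → ℝ := Uᵀ *ᵥ z with hw
  have hzw : z ⬝ᵥ z = w ⬝ᵥ w := by
    rw [hw, ← unit_dot' hU1 (Uᵀ *ᵥ z), mulVec_mulVec, hU2, one_mulVec]
  have hMz : M *ᵥ z = U *ᵥ (diagonal hM.eigenvalues *ᵥ w) := by
    conv_lhs => rw [hM.spectral_theorem]
    simp [hstar, ← mulVec_mulVec, hw]
    rw [← hUdef, hstar]
  have key : (M *ᵥ z) ⬝ᵥ (M *ᵥ z) = ∑ i, (hM.eigenvalues i) ^ 2 * (w i) ^ 2 := by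
    rw [hMz, unit_dot' hU1]
    simp only [dotProduct, mulVec_diagonal]
    exact Finset.sum_congr rfl fun i _ => by ring
  rw [key, hzw, dotProduct, Finset.mul_sum]
  apply Finset.sum_le_sum
  intro i _
  have h1 : (hM.eigenvalues i) ^ 2 ≤ k ^ 2 := by
    have := hb i
    nlinarith [abs_nonneg (hM.eigenvalues i), sq_abs (hM.eigenvalues i)]
  nlinarith [sq_nonneg (w i)]

private lemma spec_map' {n : ℕ} {R : Matrix (Fin n) (Fin n) ℝ} {μ : ℝ} (h : μ ∈ spectrum ℝ R) :
    (μ : ℂ) ∈ spectrum ℂ (R.map (algebraMap ℝ ℂ)) := by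
  rw [spectrum.mem_iff] at h ⊢
  intro hunit
  apply h
  rw [Matrix.isUnit_iff_isUnit_det, isUnit_iff_ne_zero] at hunit ⊢
  intro hdet
  apply hunit
  have : (algebraMap ℂ (Matrix (Fin n) (Fin n) ℂ)) (μ:ℂ) - R.map (algebraMap ℝ ℂ)
      = ((algebraMap ℝ (Matrix (Fin n) (Fin n) ℝ)) μ - R).map (algebraMap ℝ ℂ) := by
    rw [Matrix.map_sub _ (map_sub (algebraMap ℝ ℂ))]
    congr 1
    rw [Matrix.algebraMap_eq_diagonal, Matrix.algebraMap_eq_diagonal,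
      Matrix.diagonal_map (map_zero _)]
    congr 1
  rw [this]
  have h2 : (((algebraMap ℝ (Matrix (Fin n) (Fin n) ℝ)) μ - R).map (algebraMap ℝ ℂ)).det
      = algebraMap ℝ ℂ (((algebraMap ℝ (Matrix (Fin n) (Fin n) ℝ)) μ - R).det) :=
    ((algebraMap ℝ ℂ).map_det _).symm
  rw [h2, hdet, map_zero]

theorem stmt2 {n : ℕ} (S R : Matrix (Fin n) (Fin n) ℝ) (k : ℝ)
    (hS : S.PosDef) (hcomm : R * S = S * Rᵀ)
    (hk : k < 1)
    (hspec : IsGreatest ((fun z : ℂ => ‖z‖) '' spectrum ℂ (R.map (algebraMap ℝ ℂ))) k) :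
    (∀ y : Fin n → ℝ,
        (1 - k ^ 2) * (y ⬝ᵥ S⁻¹ *ᵥ y) ≤ y ⬝ᵥ (S⁻¹ - Rᵀ * S⁻¹ * R) *ᵥ y) ∧
      (S⁻¹ - Rᵀ * S⁻¹ * R).PosDef := by
  -- square root of S
  set T : Matrix (Fin n) (Fin n) ℝ := CFC.sqrt S with hTdef
  have hTT : T * T = S := CFC.sqrt_mul_sqrt_self S hS.posSemidef.nonneg
  have hTherm : T.IsHermitian := (CFC.sqrt_nonneg S).posSemidef.isHermitian
  have hTsym : Tᵀ = T := by
    rw [← Matrix.conjTranspose_eq_transpose_of_trivial]; exact hTherm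
  have hTdetu : IsUnit T.det := by
    rw [isUnit_iff_ne_zero]
    intro h0
    have : S.det = 0 := by rw [← hTT, Matrix.det_mul, h0, mul_zero]
    exact hS.det_pos.ne' this
  have hTunit : IsUnit T := (Matrix.isUnit_iff_isUnit_det T).mpr hTdetu
  have hTl : T⁻¹ * T = 1 := Matrix.nonsing_inv_mul T hTdetu
  have hTr : T * T⁻¹ = 1 := Matrix.mul_nonsing_inv T hTdetu
  have hSinv : S⁻¹ = T⁻¹ * T⁻¹ := by rw [← hTT, Matrix.mul_inv_rev]
  have hTinvSym : T⁻¹ᵀ = T⁻¹ := by rw [Matrix.transpose_nonsing_inv, hTsym]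
  -- the symmetrized matrix M
  set M : Matrix (Fin n) (Fin n) ℝ := T⁻¹ * R * T with hMdef
  have key : R * (T * T) = T * T * Rᵀ := by rw [hTT]; exact hcomm
  have hMsym : Mᵀ = M := by
    have h2 := congrArg (fun X => T⁻¹ * X * T⁻¹) key
    simp only [← Matrix.mul_assoc] at h2
    -- h2 : T⁻¹ * R * T * T * T⁻¹ = T⁻¹ * T * T * Rᵀ * T⁻¹
    rw [Matrix.mul_assoc (T⁻¹ * R * T), hTr, Matrix.mul_one, hTl, Matrix.one_mul] at h2
    have hMT : Mᵀ = T * Rᵀ * T⁻¹ := by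
      rw [hMdef, Matrix.transpose_mul, Matrix.transpose_mul, hTsym, hTinvSym,
        Matrix.mul_assoc]
    rw [hMT, ← h2, hMdef]
  have hMherm : M.IsHermitian := by
    rw [Matrix.IsHermitian, Matrix.conjTranspose_eq_transpose_of_trivial]; exact hMsym
  -- eigenvalue bound
  have hkb : ∀ i, |hMherm.eigenvalues i| ≤ k := by
    intro i
    have h1 : hMherm.eigenvalues i ∈ spectrum ℝ M := hMherm.eigenvalues_mem_spectrum_real i
    have h2 : spectrum ℝ M = spectrum ℝ R := by
      have hMu : M = (↑hTunit.unit⁻¹ : Matrix (Fin n) (Fin n) ℝ) * R * (hTunit.unit : Matrix (Fin n) (Fin n) ℝ) := by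
        rw [Matrix.coe_units_inv, IsUnit.unit_spec]
      rw [hMu, spectrum.units_conjugate']
    rw [h2] at h1
    have h3 := spec_map' h1
    have h4 := hspec.2 ⟨_, h3, rfl⟩
    simpa [Complex.norm_real] using h4
  have hk0 : 0 ≤ k := by
    obtain ⟨c, _, hc⟩ := hspec.1
    exact hc ▸ norm_nonneg c
  have hk2 : k ^ 2 < 1 := by nlinarith
  -- rewriting the quadratic forms
  have hSfac : S⁻¹ = (T⁻¹)ᵀ * T⁻¹ := by rw [hTinvSym, hSinv]
  have hRfac : Rᵀ * S⁻¹ * R = (T⁻¹ * R)ᵀ * (T⁻¹ * R) := by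
    rw [Matrix.transpose_mul, hTinvSym, hSinv]
    simp only [Matrix.mul_assoc]
  have hMv : ∀ y : Fin n → ℝ, (T⁻¹ * R) *ᵥ y = M *ᵥ (T⁻¹ *ᵥ y) := by
    intro y
    rw [mulVec_mulVec]
    rw [hMdef, Matrix.mul_assoc, hTr, Matrix.mul_one]
  have main : ∀ y : Fin n → ℝ,
      (1 - k ^ 2) * (y ⬝ᵥ S⁻¹ *ᵥ y) ≤ y ⬝ᵥ (S⁻¹ - Rᵀ * S⁻¹ * R) *ᵥ y := by
    intro y
    have hA : y ⬝ᵥ S⁻¹ *ᵥ y = (T⁻¹ *ᵥ y) ⬝ᵥ (T⁻¹ *ᵥ y) := by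
      rw [hSfac, quad_eq']
    have hB : y ⬝ᵥ (Rᵀ * S⁻¹ * R) *ᵥ y
        = (M *ᵥ (T⁻¹ *ᵥ y)) ⬝ᵥ (M *ᵥ (T⁻¹ *ᵥ y)) := by
      rw [hRfac, quad_eq', hMv]
    have hbound := herm_bound' hMherm hkb (T⁻¹ *ᵥ y)
    rw [Matrix.sub_mulVec, dotProduct_sub, hA, hB]
    rw [hA] at *
    linarith [hbound]
  refine ⟨main, Matrix.PosDef.of_dotProduct_mulVec_pos ?_ ?_⟩
  · exact (hS.inv.isHermitian).sub (by
      have := Matrix.isHermitian_conjTranspose_mul_mul R hS.inv.isHermitian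
      simpa [Matrix.conjTranspose_eq_transpose_of_trivial] using this)
  · intro x hx
    have h1 := main x
    have h2 : 0 < x ⬝ᵥ S⁻¹ *ᵥ x := by
      have := hS.inv.dotProduct_mulVec_pos hx
      simpa using this
    have h3 : 0 < (1 - k ^ 2) * (x ⬝ᵥ S⁻¹ *ᵥ x) := by nlinarith
    have : 0 < x ⬝ᵥ (S⁻¹ - Rᵀ * S⁻¹ * R) *ᵥ x := lt_of_lt_of_le h3 h1
    simpa using this
end

section
/- Define S_0(a,b) = ∫_0^∞ x φ_a(x) φ_b(x) ω_0(x) dx. If a and b are both even, then S_0(a,b) = (2π)^{-1/2} · (a+b+1)/(1−(a−b)²) · z_a z_b, where z_n = φ_n(0), i.e., z_0 = 1 and z_{n+1} = −√n z_{n−1}/√(n+1). -/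
open MeasureTheory

noncomputable def phi : ℕ → ℝ → ℝ
  | 0 => fun _ => 1
  | 1 => fun x => x
  | (n + 2) => fun x =>
      (x * phi (n + 1) x - Real.sqrt ((n : ℝ) + 1) * phi n x) / Real.sqrt ((n : ℝ) + 2)

noncomputable def ω0 (x : ℝ) : ℝ := (Real.sqrt (2 * Real.pi))⁻¹ * Real.exp (-x ^ 2 / 2)

noncomputable def dphi : ℕ → ℝ → ℝ
  | 0 => fun _ => 0
  | (n + 1) => fun x => Real.sqrt ((n : ℝ) + 1) * phi n x

open Set Filter Polynomial Topology

lemma sqrt_sq' (n : ℕ) : Real.sqrt ((n:ℝ) + 1) * Real.sqrt ((n:ℝ) + 1) = (n:ℝ) + 1 :=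
  Real.mul_self_sqrt (by positivity)

lemma sqrt_sq2 (n : ℕ) : Real.sqrt ((n:ℝ) + 2) * Real.sqrt ((n:ℝ) + 2) = (n:ℝ) + 2 :=
  Real.mul_self_sqrt (by positivity)

lemma rec_id (n : ℕ) (x : ℝ) :
    x * phi n x = Real.sqrt ((n : ℝ) + 1) * phi (n + 1) x + dphi n x := by
  cases n with
  | zero => simp [phi, dphi]
  | succ m =>
    have h3 : (0:ℝ) < Real.sqrt ((m:ℝ)+2) := by positivity
    have hphi : phi (m+2) x = (x * phi (m + 1) x - Real.sqrt ((m : ℝ) + 1) * phi m x) /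
        Real.sqrt ((m : ℝ) + 2) := rfl
    have hdphi : dphi (m+1) x = Real.sqrt ((m:ℝ)+1) * phi m x := rfl
    push_cast
    rw [show (m:ℝ)+1+1 = (m:ℝ)+2 from by ring, hphi, hdphi]
    field_simp
    ring

lemma hasDerivAt_phi : ∀ n, ∀ x : ℝ, HasDerivAt (phi n) (dphi n x) x := by
  have key : ∀ n, (∀ x : ℝ, HasDerivAt (phi n) (dphi n x) x) ∧
      (∀ x : ℝ, HasDerivAt (phi (n+1)) (dphi (n+1) x) x) := by
    intro n
    induction n with
    | zero =>
      constructor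
      · intro x; simpa [phi, dphi] using hasDerivAt_const x (1:ℝ)
      · intro x
        have : HasDerivAt (phi 1) 1 x := by simpa [phi] using hasDerivAt_id' x
        convert this using 1
        simp [dphi, phi]
    | succ n ih =>
      refine ⟨ih.2, fun x => ?_⟩
      have heq : (fun x : ℝ => (x * phi (n + 1) x -
          Real.sqrt ((n : ℝ) + 1) * phi n x) / Real.sqrt ((n : ℝ) + 2)) = phi (n+2) := rfl
      have h0 := (((hasDerivAt_id x).mul (ih.2 x)).sub
        ((ih.1 x).const_mul (Real.sqrt ((n:ℝ)+1)))).div_const (Real.sqrt ((n:ℝ)+2))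
      simp only [id_eq, one_mul, Pi.mul_apply, Pi.sub_apply] at h0
      rw [heq] at h0
      refine h0.congr_deriv (Eq.symm ?_)
      have hrec := rec_id n x
      have hd1 : dphi (n+1) x = Real.sqrt ((n:ℝ)+1) * phi n x := rfl
      have hd2 : dphi (n+2) x = Real.sqrt (((n+1:ℕ):ℝ)+1) * phi (n+1) x := rfl
      have h3 : (0:ℝ) < Real.sqrt ((n:ℝ)+2) := by positivity
      rw [hd2, show (((n+1:ℕ):ℝ)+1) = (n:ℝ)+2 from by push_cast; ring, hd1,
        eq_div_iff h3.ne']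
      have hs1 := sqrt_sq' n
      have hs2 := sqrt_sq2 n
      linear_combination phi (n+1) x * hs2 - phi (n+1) x * hs1 -
        Real.sqrt ((n:ℝ)+1) * hrec
  exact fun n => (key n).1

lemma hasDerivAt_dphi (n : ℕ) (x : ℝ) :
    HasDerivAt (dphi n) (x * dphi n x - (n:ℝ) * phi n x) x := by
  cases n with
  | zero => simpa [dphi] using hasDerivAt_const x (0:ℝ)
  | succ m =>
    have h : HasDerivAt (dphi (m+1)) (Real.sqrt ((m:ℝ)+1) * dphi m x) x := by
      have := (hasDerivAt_phi m x).const_mul (Real.sqrt ((m:ℝ)+1))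
      exact this
    convert h using 1
    have hrec := rec_id m x
    have hd : dphi (m+1) x = Real.sqrt ((m:ℝ)+1) * phi m x := rfl
    have hs := sqrt_sq' m
    push_cast
    rw [hd]
    linear_combination Real.sqrt ((m:ℝ)+1) * hrec + phi (m+1) x * hs

lemma hasDerivAt_ω0 (x : ℝ) : HasDerivAt ω0 (-x * ω0 x) x := by
  have h1 : HasDerivAt (fun x : ℝ => -x ^ 2 / 2) (-x) x := by
    have := ((hasDerivAt_pow 2 x).neg).div_const 2
    refine this.congr_deriv (Eq.symm ?_)
    simp; ring
  have h2 := (h1.exp).const_mul (Real.sqrt (2 * Real.pi))⁻¹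
  refine h2.congr_deriv (Eq.symm ?_)
  simp [ω0]; ring

lemma phi_odd_zero : ∀ n, Odd n → phi n 0 = 0 := by
  have key : ∀ n, (Odd n → phi n 0 = 0) ∧ (Odd (n+1) → phi (n+1) 0 = 0) := by
    intro n
    induction n with
    | zero => exact ⟨fun h => by simp at h, fun _ => rfl⟩
    | succ n ih =>
      refine ⟨ih.2, fun h => ?_⟩
      have hn : Odd n := by
        rcases h with ⟨k, hk⟩; exact ⟨k - 1, by omega⟩
      have h0 : phi n 0 = 0 := ih.1 hn
      show (0 * phi (n + 1) 0 - Real.sqrt ((n : ℝ) + 1) * phi n 0) / Real.sqrt ((n : ℝ) + 2) = 0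
      rw [h0]; simp
  exact fun n => (key n).1

lemma dphi_zero (n : ℕ) : dphi n 0 = -(Real.sqrt ((n:ℝ)+1) * phi (n+1) 0) := by
  have := rec_id n 0
  simp only [zero_mul] at this
  linarith

lemma phi_poly : ∀ n, ∃ p : ℝ[X], ∀ x, phi n x = p.eval x := by
  have key : ∀ n, (∃ p : ℝ[X], ∀ x, phi n x = p.eval x) ∧
      (∃ p : ℝ[X], ∀ x, phi (n+1) x = p.eval x) := by
    intro n
    induction n with
    | zero => exact ⟨⟨1, by simp [phi]⟩, ⟨X, by simp [phi]⟩⟩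
    | succ n ih =>
      obtain ⟨⟨p, hp⟩, ⟨q, hq⟩⟩ := ih
      refine ⟨⟨q, hq⟩, ⟨(X * q - C (Real.sqrt ((n:ℝ)+1)) * p) * C (Real.sqrt ((n:ℝ)+2))⁻¹,
        fun x => ?_⟩⟩
      show (x * phi (n + 1) x - Real.sqrt ((n : ℝ) + 1) * phi n x) / Real.sqrt ((n : ℝ) + 2) = _
      simp [id_eq, hp, hq, div_eq_mul_inv]
  exact fun n => (key n).1

lemma dphi_poly (n : ℕ) : ∃ p : ℝ[X], ∀ x, dphi n x = p.eval x := by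
  cases n with
  | zero => exact ⟨0, by simp [dphi]⟩
  | succ m =>
    obtain ⟨p, hp⟩ := phi_poly m
    exact ⟨C (Real.sqrt ((m:ℝ)+1)) * p, fun x => by simp [dphi, hp]⟩

lemma integrableOn_poly_gauss (p : ℝ[X]) :
    IntegrableOn (fun x => p.eval x * Real.exp (-x^2/2)) (Ioi (0:ℝ)) := by
  have base : ∀ i : ℕ, IntegrableOn (fun x : ℝ => x ^ i * Real.exp (-x^2/2)) (Ioi (0:ℝ)) := by
    intro i
    have h := integrableOn_rpow_mul_exp_neg_mul_sq (b := 1/2) (by norm_num)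
      (s := (i:ℝ)) (lt_of_lt_of_le neg_one_lt_zero (Nat.cast_nonneg i))
    apply h.congr_fun ?_ measurableSet_Ioi
    intro x hx
    show x ^ ((i:ℕ):ℝ) * Real.exp (-(1/2) * x^2) = x ^ i * Real.exp (-x^2/2)
    rw [Real.rpow_natCast]
    congr 1
    ring
  have heq : ∀ x : ℝ, p.eval x * Real.exp (-x^2/2) =
      ∑ i ∈ Finset.range (p.natDegree + 1), p.coeff i * (x ^ i * Real.exp (-x^2/2)) := by
    intro x
    rw [Polynomial.eval_eq_sum_range, Finset.sum_mul]
    congr 1; ext i; ring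
  simp_rw [heq]
  exact integrable_finset_sum _ (fun i _ => (base i).const_mul _)

lemma tendsto_poly_gauss (p : ℝ[X]) :
    Tendsto (fun x => p.eval x * Real.exp (-x^2/2)) atTop (𝓝 0) := by
  have hg : Tendsto (fun x => |p.eval x / Real.exp x|) atTop (𝓝 0) := by
    simpa using (p.tendsto_div_exp_atTop).abs
  have hb : ∀ᶠ x in atTop, ‖p.eval x * Real.exp (-x^2/2)‖ ≤ |p.eval x / Real.exp x| := by
    filter_upwards [eventually_ge_atTop (2:ℝ)] with x hx
    rw [Real.norm_eq_abs, abs_mul, abs_of_nonneg (Real.exp_pos _).le, abs_div,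
      abs_of_nonneg (Real.exp_pos _).le, div_eq_mul_inv (|Polynomial.eval x p|) (Real.exp x),
      ← Real.exp_neg]
    apply mul_le_mul_of_nonneg_left _ (abs_nonneg _)
    apply Real.exp_le_exp.2
    nlinarith
  exact squeeze_zero_norm' hb hg

/-- Master FTC lemma: integral over (0,∞) of a derivative of a poly × gaussian. -/
lemma integral_deriv_eq {F F' : ℝ → ℝ} (hd : ∀ x, HasDerivAt F (F' x) x)
    (p q : ℝ[X]) (hF : ∀ x, F x = p.eval x * Real.exp (-x^2/2))
    (hF' : ∀ x, F' x = q.eval x * Real.exp (-x^2/2)) :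
    ∫ x in Ioi (0:ℝ), F' x = -F 0 := by
  have hi : IntegrableOn F' (Ioi (0:ℝ)) :=
    (integrableOn_poly_gauss q).congr_fun (fun x _ => (hF' x).symm) measurableSet_Ioi
  have ht : Tendsto F atTop (𝓝 0) :=
    (tendsto_poly_gauss p).congr (fun x => (hF x).symm)
  have := integral_Ioi_of_hasDerivAt_of_tendsto' (f := F) (f' := F') (a := 0) (m := 0)
    (fun x _ => hd x) hi ht
  rw [this]; ring

lemma omega0_eq (x : ℝ) : ω0 x = (Real.sqrt (2 * Real.pi))⁻¹ * Real.exp (-x^2/2) := rfl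

lemma omega0_zero : ω0 0 = (Real.sqrt (2 * Real.pi))⁻¹ := by
  simp [ω0]

/-- Wronskian-type identity. -/
lemma hasDerivAt_G (m n : ℕ) (x : ℝ) :
    HasDerivAt (fun x => ω0 x * (dphi m x * phi n x - phi m x * dphi n x))
      (((n:ℝ) - (m:ℝ)) * (phi m x * phi n x * ω0 x)) x := by
  have h := (hasDerivAt_ω0 x).mul
    (((hasDerivAt_dphi m x).mul (hasDerivAt_phi n x)).sub
      ((hasDerivAt_phi m x).mul (hasDerivAt_dphi n x)))
  refine h.congr_deriv (Eq.symm ?_)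
  simp only [Pi.mul_apply, Pi.sub_apply]
  ring

lemma hasDerivAt_F (a b : ℕ) (x : ℝ) :
    HasDerivAt (fun x => phi a x * phi b x * ω0 x)
      ((dphi a x * phi b x + phi a x * dphi b x - x * phi a x * phi b x) * ω0 x) x := by
  have h := ((hasDerivAt_phi a x).mul (hasDerivAt_phi b x)).mul (hasDerivAt_ω0 x)
  refine h.congr_deriv (Eq.symm ?_)
  simp only [Pi.mul_apply, Pi.sub_apply]
  ring

/-- The orthogonality-type half-line integral for distinct indices. -/
lemma key_integral (m n : ℕ) (hne : (n:ℝ) ≠ (m:ℝ)) :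
    ∫ x in Ioi (0:ℝ), phi m x * phi n x * ω0 x =
      ω0 0 * (phi m 0 * dphi n 0 - dphi m 0 * phi n 0) / ((n:ℝ) - (m:ℝ)) := by
  obtain ⟨pm, hpm⟩ := phi_poly m
  obtain ⟨pn, hpn⟩ := phi_poly n
  obtain ⟨qm, hqm⟩ := dphi_poly m
  obtain ⟨qn, hqn⟩ := dphi_poly n
  set c := (Real.sqrt (2 * Real.pi))⁻¹
  have hint : ∫ x in Ioi (0:ℝ), ((n:ℝ) - (m:ℝ)) * (phi m x * phi n x * ω0 x) =
      -(ω0 0 * (dphi m 0 * phi n 0 - phi m 0 * dphi n 0)) := by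
    apply integral_deriv_eq (hasDerivAt_G m n)
      (C c * (qm * pn - pm * qn)) (C (((n:ℝ) - (m:ℝ)) * c) * (pm * pn))
    · intro x; simp only [omega0_eq, hpm, hpn, hqm, hqn, eval_mul, eval_sub, eval_C]; ring
    · intro x; simp only [omega0_eq, hpm, hpn, eval_mul, eval_sub, eval_C]; ring
  rw [integral_const_mul] at hint
  have hd : ((n:ℝ) - (m:ℝ)) ≠ 0 := sub_ne_zero.2 hne
  field_simp
  linear_combination hint

lemma parity_ne {a b : ℕ} (ha : Even a) (hb : Even b) (m : ℕ) (hm : a = m + 1) :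
    (b:ℝ) ≠ (m:ℝ) := by
  intro h
  have hbm : b = m := by exact_mod_cast h
  subst hbm hm
  rcases ha with ⟨k, hk⟩; rcases hb with ⟨l, hl⟩; omega

lemma J_eq (a b : ℕ) (ha : Even a) (hb : Even b) :
    ∫ x in Ioi (0:ℝ), dphi a x * phi b x * ω0 x =
      (a:ℝ) * (ω0 0 * (phi a 0 * phi b 0)) / ((b:ℝ) - (a:ℝ) + 1) := by
  cases a with
  | zero => simp [dphi]
  | succ m =>
    have hne := parity_ne ha hb m rfl
    have hkey := key_integral m b hne
    have hphi_m : phi m 0 = 0 := by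
      apply phi_odd_zero
      rcases ha with ⟨k, hk⟩
      exact ⟨k - 1, by omega⟩
    have hdphi_m : dphi m 0 = -(Real.sqrt ((m:ℝ)+1) * phi (m+1) 0) := dphi_zero m
    have h1 : ∫ x in Ioi (0:ℝ), dphi (m+1) x * phi b x * ω0 x =
        Real.sqrt ((m:ℝ)+1) * ∫ x in Ioi (0:ℝ), phi m x * phi b x * ω0 x := by
      rw [← integral_const_mul]
      congr 1; funext x
      show Real.sqrt ((m:ℝ)+1) * phi m x * phi b x * ω0 x = _
      ring
    rw [h1, hkey, hphi_m, hdphi_m]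
    have hs := sqrt_sq' m
    have hd : (b:ℝ) - (m:ℝ) ≠ 0 := sub_ne_zero.2 hne
    have hcast : ((m+1 : ℕ):ℝ) = (m:ℝ) + 1 := by push_cast; ring
    rw [hcast]
    have hd2 : (b:ℝ) - ((m:ℝ)+1) + 1 ≠ 0 := by
      intro h; apply hd; linarith
    rw [show (b:ℝ) - ((m:ℝ)+1) + 1 = (b:ℝ) - (m:ℝ) from by ring]
    field_simp
    linear_combination (ω0 0 * phi (m+1) 0 * phi b 0) * hs

lemma sub_ne_parity {a b : ℕ} (ha : Even a) (hb : Even b) :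
    (b:ℝ) - (a:ℝ) + 1 ≠ 0 := by
  intro h
  have h1 : (a:ℝ) = (b:ℝ) + 1 := by linarith
  have h2 : a = b + 1 := by exact_mod_cast h1
  rcases ha with ⟨k, hk⟩; rcases hb with ⟨l, hl⟩; omega

theorem stmt9 (a b : ℕ) (ha : Even a) (hb : Even b) :
    ∫ x in Set.Ioi (0 : ℝ), x * phi a x * phi b x * ω0 x
      = (Real.sqrt (2 * Real.pi))⁻¹ * (((a : ℝ) + (b : ℝ) + 1) / (1 - ((a : ℝ) - (b : ℝ)) ^ 2))
          * (phi a 0 * phi b 0) := by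
  obtain ⟨pa, hpa⟩ := phi_poly a
  obtain ⟨pb, hpb⟩ := phi_poly b
  obtain ⟨qa, hqa⟩ := dphi_poly a
  obtain ⟨qb, hqb⟩ := dphi_poly b
  set c := (Real.sqrt (2 * Real.pi))⁻¹ with hc
  have hIBP : ∫ x in Ioi (0:ℝ),
      (dphi a x * phi b x + phi a x * dphi b x - x * phi a x * phi b x) * ω0 x =
      -(phi a 0 * phi b 0 * ω0 0) := by
    apply integral_deriv_eq (hasDerivAt_F a b) (C c * (pa * pb))
      (C c * (qa * pb + pa * qb - X * pa * pb))
    · intro x; simp only [omega0_eq, hpa, hpb, eval_mul, eval_sub, eval_add, eval_C, eval_X]; ring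
    · intro x; simp only [omega0_eq, hpa, hpb, hqa, hqb, eval_mul, eval_sub, eval_add, eval_C, eval_X]; ring
  have int1 : IntegrableOn (fun x => dphi a x * phi b x * ω0 x) (Ioi (0:ℝ)) := by
    apply (integrableOn_poly_gauss (C c * (qa * pb))).congr_fun _ measurableSet_Ioi
    intro x _; simp only [omega0_eq, hqa, hpb, eval_mul, eval_C]; ring
  have int2 : IntegrableOn (fun x => phi a x * dphi b x * ω0 x) (Ioi (0:ℝ)) := by
    apply (integrableOn_poly_gauss (C c * (pa * qb))).congr_fun _ measurableSet_Ioi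
    intro x _; simp only [omega0_eq, hpa, hqb, eval_mul, eval_C]; ring
  have int3 : IntegrableOn (fun x => x * phi a x * phi b x * ω0 x) (Ioi (0:ℝ)) := by
    apply (integrableOn_poly_gauss (C c * (X * pa * pb))).congr_fun _ measurableSet_Ioi
    intro x _; simp only [omega0_eq, hpa, hpb, eval_mul, eval_C, eval_X]; ring
  have hsplit : ∫ x in Ioi (0:ℝ),
      (dphi a x * phi b x + phi a x * dphi b x - x * phi a x * phi b x) * ω0 x =
      (∫ x in Ioi (0:ℝ), dphi a x * phi b x * ω0 x) +
      (∫ x in Ioi (0:ℝ), phi a x * dphi b x * ω0 x) -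
      (∫ x in Ioi (0:ℝ), x * phi a x * phi b x * ω0 x) := by
    have int12 : IntegrableOn
        (fun x => dphi a x * phi b x * ω0 x + phi a x * dphi b x * ω0 x) (Ioi (0:ℝ)) :=
      int1.add int2
    calc ∫ x in Ioi (0:ℝ),
        (dphi a x * phi b x + phi a x * dphi b x - x * phi a x * phi b x) * ω0 x
        = ∫ x in Ioi (0:ℝ), ((dphi a x * phi b x * ω0 x + phi a x * dphi b x * ω0 x) -
            x * phi a x * phi b x * ω0 x) := by congr 1; funext x; ring
      _ = (∫ x in Ioi (0:ℝ), (dphi a x * phi b x * ω0 x + phi a x * dphi b x * ω0 x)) -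
            ∫ x in Ioi (0:ℝ), x * phi a x * phi b x * ω0 x := integral_sub int12 int3
      _ = _ := by rw [integral_add int1 int2]
  have hJ1 := J_eq a b ha hb
  have hJ2' := J_eq b a hb ha
  have hJ2 : ∫ x in Ioi (0:ℝ), phi a x * dphi b x * ω0 x =
      (b:ℝ) * (ω0 0 * (phi a 0 * phi b 0)) / ((a:ℝ) - (b:ℝ) + 1) := by
    have heq : (fun x => phi a x * dphi b x * ω0 x) = (fun x => dphi b x * phi a x * ω0 x) := by
      funext x; ring
    rw [heq, hJ2']; ring
  have hd1 : (b:ℝ) - (a:ℝ) + 1 ≠ 0 := sub_ne_parity ha hb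
  have hd2 : (a:ℝ) - (b:ℝ) + 1 ≠ 0 := sub_ne_parity hb ha
  rw [hsplit, hJ1, hJ2] at hIBP
  rw [omega0_zero, ← hc] at hIBP
  have hI : ∫ x in Ioi (0:ℝ), x * phi a x * phi b x * ω0 x =
      (a:ℝ) * (c * (phi a 0 * phi b 0)) / ((b:ℝ) - (a:ℝ) + 1) +
      (b:ℝ) * (c * (phi a 0 * phi b 0)) / ((a:ℝ) - (b:ℝ) + 1) +
      phi a 0 * phi b 0 * c := by linarith
  rw [hI, show (1:ℝ) - ((a:ℝ) - (b:ℝ))^2 = ((b:ℝ) - (a:ℝ) + 1) * ((a:ℝ) - (b:ℝ) + 1) from by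
    ring]
  field_simp
  ring
end
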